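/- Fix M ≥ 0. There exists a constant C > 0, depending only on M, such that for all nonzero ξ, η ∈ ℝ², the 2×2 matrix products satisfy ‖Π^M_+(ξ)·Π^M_−(η)‖ ≤ C·(∠(ξ, η) + ⟨ξ⟩^{-1} + ⟨η⟩^{-1}) and ‖Π^M_−(ξ)·Π^M_+(η)‖ ≤ C·(∠(ξ, η) + ⟨ξ⟩^{-1} + ⟨η⟩^{-1}), where ‖·‖ denotes the operator norm on ℂ² and ⟨ξ⟩ = √(1 + |ξ|²). -/

import Mathlib

noncomputable section

/-- ℝ² as a Euclidean space. -/
abbrev E2 := EuclideanSpace ℝ (Fin 2)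

/-- The Japanese bracket `⟨ξ⟩_M = √(M² + |ξ|²)`. -/
def jb (M : ℝ) (ξ : E2) : ℝ := Real.sqrt (M ^ 2 + ‖ξ‖ ^ 2)

/-- The Pauli matrix σ¹. -/
def σ1 : Matrix (Fin 2) (Fin 2) ℂ := !![0, 1; 1, 0]

/-- The Pauli matrix σ². -/
def σ2 : Matrix (Fin 2) (Fin 2) ℂ := !![0, -Complex.I; Complex.I, 0]

/-- The Dirac matrix γ⁰. -/
def γ0 : Matrix (Fin 2) (Fin 2) ℂ := !![1, 0; 0, -1]

/-- The projection `Π^M_s(ξ) = (1/2)[I + s·⟨ξ⟩_M⁻¹(ξ₁σ¹ + ξ₂σ² + Mγ⁰)]`, `s = ±1`. -/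
def PiM (M s : ℝ) (ξ : E2) : Matrix (Fin 2) (Fin 2) ℂ :=
  (2 : ℂ)⁻¹ • (1 + ((s / jb M ξ : ℝ) : ℂ) •
    (((ξ 0 : ℝ) : ℂ) • σ1 + ((ξ 1 : ℝ) : ℂ) • σ2 + ((M : ℝ) : ℂ) • γ0))

/-- The operator norm on ℂ² of a 2×2 complex matrix. -/
def opNorm (A : Matrix (Fin 2) (Fin 2) ℂ) : ℝ := ‖Matrix.toEuclideanCLM (𝕜 := ℂ) A‖

open Matrix Complex InnerProductGeometry
open scoped Matrix.Norms.L2Operator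

/-! ### Norm machinery -/

lemma opNorm_eq_norm (A : Matrix (Fin 2) (Fin 2) ℂ) : opNorm A = ‖A‖ := rfl

lemma coordC_le (x : EuclideanSpace ℂ (Fin 2)) (i : Fin 2) : ‖x i‖ ≤ ‖x‖ := by
  rw [EuclideanSpace.norm_eq]
  rw [Real.le_sqrt (norm_nonneg _) (by positivity), Fin.sum_univ_two]
  fin_cases i <;> simp <;> positivity

lemma normC_le (x : EuclideanSpace ℂ (Fin 2)) : ‖x‖ ≤ ‖x 0‖ + ‖x 1‖ := by
  rw [EuclideanSpace.norm_eq, Fin.sum_univ_two]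
  have h : ‖x 0‖ ^ 2 + ‖x 1‖ ^ 2 ≤ (‖x 0‖ + ‖x 1‖) ^ 2 := by
    nlinarith [norm_nonneg (x 0), norm_nonneg (x 1)]
  calc Real.sqrt (‖x 0‖^2 + ‖x 1‖^2) ≤ Real.sqrt ((‖x 0‖ + ‖x 1‖)^2) := Real.sqrt_le_sqrt h
    _ = ‖x 0‖ + ‖x 1‖ := Real.sqrt_sq (by positivity)

lemma norm_le_sum (A : Matrix (Fin 2) (Fin 2) ℂ) :
    ‖A‖ ≤ ‖A 0 0‖ + ‖A 0 1‖ + ‖A 1 0‖ + ‖A 1 1‖ := by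
  rw [Matrix.l2_opNorm_def]
  refine ContinuousLinearMap.opNorm_le_bound _ (by positivity) fun x => ?_
  have happ : ∀ i, ((Matrix.toEuclideanLin.trans LinearMap.toContinuousLinearMap) A x) i
      = A i 0 * x 0 + A i 1 * x 1 := by
    intro i
    show (A *ᵥ _) i = _
    simp [Matrix.mulVec, dotProduct, Fin.sum_univ_two]
  refine le_trans (normC_le _) ?_
  have b0 : ‖A 0 0 * x 0 + A 0 1 * x 1‖ ≤ (‖A 0 0‖ + ‖A 0 1‖) * ‖x‖ := by
    refine le_trans (norm_add_le _ _) ?_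
    rw [add_mul]
    gcongr <;> rw [norm_mul] <;> gcongr <;> exact coordC_le x _
  have b1 : ‖A 1 0 * x 0 + A 1 1 * x 1‖ ≤ (‖A 1 0‖ + ‖A 1 1‖) * ‖x‖ := by
    refine le_trans (norm_add_le _ _) ?_
    rw [add_mul]
    gcongr <;> rw [norm_mul] <;> gcongr <;> exact coordC_le x _
  rw [happ 0, happ 1]
  nlinarith [norm_nonneg x]

/-! ### The matrix `B` -/

def B (p q r : ℝ) : Matrix (Fin 2) (Fin 2) ℂ :=
  !![(r : ℂ), (p : ℂ) - (q : ℂ) * Complex.I; (p : ℂ) + (q : ℂ) * Complex.I, -(r : ℂ)]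

lemma PiM_one (M : ℝ) (ξ : E2) :
    PiM M 1 ξ = (2 : ℂ)⁻¹ • (1 + B (ξ 0 / jb M ξ) (ξ 1 / jb M ξ) (M / jb M ξ)) := by
  unfold PiM B σ1 σ2 γ0
  congr 1
  ext i j
  fin_cases i <;> fin_cases j <;>
    simp [Matrix.one_apply] <;> push_cast <;> ring

lemma PiM_neg (M : ℝ) (ξ : E2) :
    PiM M (-1) ξ = (2 : ℂ)⁻¹ • (1 - B (ξ 0 / jb M ξ) (ξ 1 / jb M ξ) (M / jb M ξ)) := by
  unfold PiM B σ1 σ2 γ0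
  congr 1
  ext i j
  fin_cases i <;> fin_cases j <;>
    simp [Matrix.one_apply] <;> push_cast <;> ring

lemma B_mul_self (p q r : ℝ) (h : p ^ 2 + q ^ 2 + r ^ 2 = 1) : B p q r * B p q r = 1 := by
  have h' : (p : ℂ) ^ 2 + (q : ℂ) ^ 2 + (r : ℂ) ^ 2 = 1 := by exact_mod_cast h
  unfold B
  ext i j
  fin_cases i <;> fin_cases j <;>
    simp [Matrix.mul_apply, Fin.sum_univ_two, Matrix.one_apply] <;>
    first
    | linear_combination (q : ℂ) ^ 2 * Complex.I_sq - h'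
    | linear_combination h' - (q : ℂ) ^ 2 * Complex.I_sq
    | ring

lemma B_sub (p q r p' q' r' : ℝ) : B p q r - B p' q' r' = B (p - p') (q - q') (r - r') := by
  unfold B
  ext i j
  fin_cases i <;> fin_cases j <;> simp <;> push_cast <;> ring

lemma norm_B_le (p q r : ℝ) : ‖B p q r‖ ≤ 2 * (|p| + |q| + |r|) := by
  refine le_trans (norm_le_sum _) ?_
  have e1 : ‖((r : ℝ) : ℂ)‖ = |r| := by simp
  have e2 : ‖(p : ℂ) - (q : ℂ) * Complex.I‖ ≤ |p| + |q| := by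
    refine le_trans (norm_sub_le _ _) ?_
    simp [norm_mul]
  have e3 : ‖(p : ℂ) + (q : ℂ) * Complex.I‖ ≤ |p| + |q| := by
    refine le_trans (norm_add_le _ _) ?_
    simp [norm_mul]
  have : B p q r 0 0 = (r : ℂ) ∧ B p q r 0 1 = (p : ℂ) - (q : ℂ) * Complex.I ∧
      B p q r 1 0 = (p : ℂ) + (q : ℂ) * Complex.I ∧ B p q r 1 1 = -(r : ℂ) := by
    unfold B; refine ⟨by simp, by simp, by simp, by simp⟩
  obtain ⟨ha, hb, hc, hd⟩ := this
  rw [ha, hb, hc, hd, norm_neg, e1]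
  linarith

lemma norm_one_le : ‖(1 : Matrix (Fin 2) (Fin 2) ℂ)‖ ≤ 2 := by
  refine le_trans (norm_le_sum _) ?_
  simp [Matrix.one_apply]
  norm_num

/-! ### Scalar facts -/

lemma jb_sq (M : ℝ) (ξ : E2) : (jb M ξ) ^ 2 = M ^ 2 + ‖ξ‖ ^ 2 :=
  Real.sq_sqrt (by positivity)

lemma jb_nonneg (M : ℝ) (ξ : E2) : 0 ≤ jb M ξ := Real.sqrt_nonneg _

lemma le_jb_left (M : ℝ) (hM : 0 ≤ M) (ξ : E2) : M ≤ jb M ξ := by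
  rw [jb, Real.le_sqrt hM (by positivity)]
  nlinarith [sq_nonneg ‖ξ‖]

lemma le_jb_right (M : ℝ) (ξ : E2) : ‖ξ‖ ≤ jb M ξ := by
  rw [jb, Real.le_sqrt (norm_nonneg _) (by positivity)]
  nlinarith [sq_nonneg M]

lemma jb_pos (M : ℝ) {ξ : E2} (hξ : ξ ≠ 0) : 0 < jb M ξ := by
  have : 0 < ‖ξ‖ := norm_pos_iff.2 hξ
  exact lt_of_lt_of_le this (le_jb_right M ξ)

lemma jb1_pos (ξ : E2) : 0 < jb 1 ξ := by
  rw [jb]; positivity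

lemma jb1_le (ξ : E2) : jb 1 ξ ≤ 1 + ‖ξ‖ := by
  rw [jb]
  have h : (1 : ℝ) ^ 2 + ‖ξ‖ ^ 2 ≤ (1 + ‖ξ‖) ^ 2 := by nlinarith [norm_nonneg ξ]
  calc Real.sqrt (1 ^ 2 + ‖ξ‖ ^ 2) ≤ Real.sqrt ((1 + ‖ξ‖) ^ 2) := Real.sqrt_le_sqrt h
    _ = 1 + ‖ξ‖ := Real.sqrt_sq (by positivity)

lemma norm_sq_E2 (ξ : E2) : ‖ξ‖ ^ 2 = (ξ 0) ^ 2 + (ξ 1) ^ 2 := by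
  rw [EuclideanSpace.norm_eq, Real.sq_sqrt (by positivity), Fin.sum_univ_two]
  simp [sq_abs]

lemma coordR_le (ξ : E2) (i : Fin 2) : |ξ i| ≤ ‖ξ‖ := by
  rw [EuclideanSpace.norm_eq]
  rw [Real.le_sqrt (abs_nonneg _) (by positivity), Fin.sum_univ_two]
  fin_cases i <;> simp [sq_abs] <;> positivity

/-- The bound `M/⟨ξ⟩_M ≤ (M+1)/⟨ξ⟩₁`. -/
lemma r_bound (M : ℝ) (hM : 0 ≤ M) {ξ : E2} (hξ : ξ ≠ 0) :
    M / jb M ξ ≤ (M + 1) * (jb 1 ξ)⁻¹ := by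
  have hJ : 0 < jb M ξ := jb_pos M hξ
  have hK : 0 < jb 1 ξ := jb1_pos ξ
  rw [show (M + 1) * (jb 1 ξ)⁻¹ = (M + 1) / jb 1 ξ from (div_eq_mul_inv _ _).symm,
    div_le_div_iff₀ hJ hK]
  have h1 := jb1_le ξ
  have h2 := le_jb_left M hM ξ
  have h3 := le_jb_right M ξ
  nlinarith [norm_nonneg ξ]

/-- The bound `1 - |ξ|/⟨ξ⟩_M ≤ (M+1)/⟨ξ⟩₁`. -/
lemma t_bound (M : ℝ) (hM : 0 ≤ M) {ξ : E2} (hξ : ξ ≠ 0) :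
    1 - ‖ξ‖ / jb M ξ ≤ (M + 1) * (jb 1 ξ)⁻¹ := by
  have hJ : 0 < jb M ξ := jb_pos M hξ
  have hK : 0 < jb 1 ξ := jb1_pos ξ
  have h1 := jb1_le ξ
  have h2 := le_jb_left M hM ξ
  have h3 := le_jb_right M ξ
  have hJ2 := jb_sq M ξ
  have hn : 0 ≤ ‖ξ‖ := norm_nonneg ξ
  have key : (jb M ξ - ‖ξ‖) * jb 1 ξ ≤ (M + 1) * jb M ξ := by
    nlinarith [mul_nonneg hn (sub_nonneg.2 h3)]
  have heq : 1 - ‖ξ‖ / jb M ξ = (jb M ξ - ‖ξ‖) / jb M ξ := by field_simp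
  rw [heq, show (M + 1) * (jb 1 ξ)⁻¹ = (M + 1) / jb 1 ξ from (div_eq_mul_inv _ _).symm,
    div_le_div_iff₀ hJ hK]
  nlinarith

/-! ### Chord–arc inequality -/

lemma chord_le_angle {ξ η : E2} (hξ : ξ ≠ 0) (hη : η ≠ 0) :
    ‖‖ξ‖⁻¹ • ξ - ‖η‖⁻¹ • η‖ ≤ angle ξ η := by
  have hnξ : 0 < ‖ξ‖ := norm_pos_iff.2 hξ
  have hnη : 0 < ‖η‖ := norm_pos_iff.2 hη
  set u : E2 := ‖ξ‖⁻¹ • ξ with hu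
  set v : E2 := ‖η‖⁻¹ • η with hv
  have hnu : ‖u‖ = 1 := by
    rw [hu, norm_smul, Real.norm_eq_abs, abs_of_pos (inv_pos.2 hnξ), inv_mul_cancel₀ hnξ.ne']
  have hnv : ‖v‖ = 1 := by
    rw [hv, norm_smul, Real.norm_eq_abs, abs_of_pos (inv_pos.2 hnη), inv_mul_cancel₀ hnη.ne']
  have hang : angle u v = angle ξ η := by
    rw [hu, hv, angle_smul_left_of_pos _ _ (inv_pos.2 hnξ),
      angle_smul_right_of_pos _ _ (inv_pos.2 hnη)]
  have hinner : inner ℝ u v = Real.cos (angle u v) := by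
    have := cos_angle_mul_norm_mul_norm u v
    rw [hnu, hnv] at this
    simpa using this.symm
  have hsq : ‖u - v‖ ^ 2 = 2 - 2 * Real.cos (angle u v) := by
    rw [norm_sub_sq_real, hnu, hnv, hinner]; ring
  have hcos := Real.one_sub_sq_div_two_le_cos (x := angle u v)
  have h1 : ‖u - v‖ ^ 2 ≤ (angle u v) ^ 2 := by nlinarith
  have h2 : 0 ≤ angle u v := angle_nonneg u v
  have h3 : 0 ≤ ‖u - v‖ := norm_nonneg _
  nlinarith [hang, h1]

/-! ### Coefficient difference bound -/

lemma coeff_bound (M : ℝ) (hM : 0 ≤ M) {ξ η : E2} (hξ : ξ ≠ 0) (hη : η ≠ 0) :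
    |ξ 0 / jb M ξ - η 0 / jb M η| + |ξ 1 / jb M ξ - η 1 / jb M η|
      + |M / jb M ξ - M / jb M η|
      ≤ 3 * (M + 1) * (angle ξ η + (jb 1 ξ)⁻¹ + (jb 1 η)⁻¹) := by
  have hnξ : 0 < ‖ξ‖ := norm_pos_iff.2 hξ
  have hnη : 0 < ‖η‖ := norm_pos_iff.2 hη
  have hJξ : 0 < jb M ξ := jb_pos M hξ
  have hJη : 0 < jb M η := jb_pos M hη
  set u : E2 := ‖ξ‖⁻¹ • ξ with hu
  set v : E2 := ‖η‖⁻¹ • η with hv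
  set t : ℝ := ‖ξ‖ / jb M ξ with ht
  set t' : ℝ := ‖η‖ / jb M η with ht'
  have ht0 : 0 ≤ t := by positivity
  have ht1 : t ≤ 1 := by rw [ht, div_le_one hJξ]; exact le_jb_right M ξ
  have ht'0 : 0 ≤ t' := by positivity
  have ht'1 : t' ≤ 1 := by rw [ht', div_le_one hJη]; exact le_jb_right M η
  have hcoordξ : ∀ i, ξ i / jb M ξ = t * u i := by
    intro i
    rw [hu, ht, PiLp.smul_apply, smul_eq_mul]
    field_simp
  have hcoordη : ∀ i, η i / jb M η = t' * v i := by
    intro i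
    rw [hv, ht', PiLp.smul_apply, smul_eq_mul]
    field_simp
  have hnv : ‖v‖ = 1 := by
    rw [hv, norm_smul, Real.norm_eq_abs, abs_of_pos (inv_pos.2 hnη), inv_mul_cancel₀ hnη.ne']
  have hvcoord : ∀ i, |v i| ≤ 1 := fun i => by
    have := coordR_le v i; rw [hnv] at this; exact this
  have hchord := chord_le_angle hξ hη
  have hcoorduv : ∀ i, |u i - v i| ≤ angle ξ η := by
    intro i
    have h := coordR_le (u - v) i
    rw [PiLp.sub_apply] at h
    exact le_trans h hchord
  have htt : |t - t'| ≤ (M + 1) * (jb 1 ξ)⁻¹ + (M + 1) * (jb 1 η)⁻¹ := by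
    have b1 := t_bound M hM hξ
    have b2 := t_bound M hM hη
    rw [abs_le]
    constructor <;> nlinarith [mul_nonneg (add_nonneg hM zero_le_one) (le_of_lt (inv_pos.2 (jb1_pos ξ))), mul_nonneg (add_nonneg hM zero_le_one) (le_of_lt (inv_pos.2 (jb1_pos η)))]
  have hcoord_diff : ∀ i, |ξ i / jb M ξ - η i / jb M η| ≤ angle ξ η + |t - t'| := by
    intro i
    rw [hcoordξ i, hcoordη i]
    have : t * u i - t' * v i = t * (u i - v i) + (t - t') * v i := by ring
    rw [this]
    refine le_trans (abs_add_le _ _) ?_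
    rw [abs_mul, abs_mul]
    have e1 : |t| * |u i - v i| ≤ angle ξ η := by
      rw [_root_.abs_of_nonneg ht0]
      calc t * |u i - v i| ≤ 1 * |u i - v i| := by
              exact mul_le_mul_of_nonneg_right ht1 (abs_nonneg _)
        _ = |u i - v i| := one_mul _
        _ ≤ angle ξ η := hcoorduv i
    have e2 : |t - t'| * |v i| ≤ |t - t'| := by
      calc |t - t'| * |v i| ≤ |t - t'| * 1 := by
              exact mul_le_mul_of_nonneg_left (hvcoord i) (abs_nonneg _)
        _ = |t - t'| := mul_one _
    linarith
  have hr : |M / jb M ξ - M / jb M η| ≤ (M + 1) * (jb 1 ξ)⁻¹ + (M + 1) * (jb 1 η)⁻¹ := by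
    have b1 := r_bound M hM hξ
    have b2 := r_bound M hM hη
    have n1 : 0 ≤ M / jb M ξ := by positivity
    have n2 : 0 ≤ M / jb M η := by positivity
    rw [abs_le]
    constructor <;> nlinarith
  have h0 := hcoord_diff 0
  have h1 := hcoord_diff 1
  have hθ : 0 ≤ angle ξ η := angle_nonneg ξ η
  have hX : 0 ≤ (jb 1 ξ)⁻¹ := le_of_lt (inv_pos.2 (jb1_pos ξ))
  have hY : 0 ≤ (jb 1 η)⁻¹ := le_of_lt (inv_pos.2 (jb1_pos η))
  nlinarith [htt]

/-! ### Projection facts -/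

lemma coeff_sq (M : ℝ) {ξ : E2} (hξ : ξ ≠ 0) :
    (ξ 0 / jb M ξ) ^ 2 + (ξ 1 / jb M ξ) ^ 2 + (M / jb M ξ) ^ 2 = 1 := by
  have hJ : 0 < jb M ξ := jb_pos M hξ
  have h := jb_sq M ξ
  rw [norm_sq_E2] at h
  field_simp
  linarith

lemma PiM_mul_zero (M : ℝ) {ξ : E2} (hξ : ξ ≠ 0) :
    PiM M 1 ξ * PiM M (-1) ξ = 0 ∧ PiM M (-1) ξ * PiM M 1 ξ = 0 := by
  rw [PiM_one, PiM_neg]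
  set D := B (ξ 0 / jb M ξ) (ξ 1 / jb M ξ) (M / jb M ξ) with hD
  have hsq : D * D = 1 := B_mul_self _ _ _ (coeff_sq M hξ)
  constructor
  · rw [smul_mul_assoc, mul_smul_comm,
      show (1 + D) * (1 - D) = 1 - D * D by noncomm_ring, hsq]
    simp
  · rw [smul_mul_assoc, mul_smul_comm,
      show (1 - D) * (1 + D) = 1 - D * D by noncomm_ring, hsq]
    simp

lemma norm_PiM_le (M : ℝ) (hM : 0 ≤ M) (s : ℝ) (hs : s = 1 ∨ s = -1) {ξ : E2} (hξ : ξ ≠ 0) :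
    ‖PiM M s ξ‖ ≤ 4 := by
  have hJ : 0 < jb M ξ := jb_pos M hξ
  have hB : ‖B (ξ 0 / jb M ξ) (ξ 1 / jb M ξ) (M / jb M ξ)‖ ≤ 6 := by
    refine le_trans (norm_B_le _ _ _) ?_
    have h0 : |ξ 0 / jb M ξ| ≤ 1 := by
      rw [abs_div, abs_of_pos hJ, div_le_one hJ]
      exact le_trans (coordR_le ξ 0) (le_jb_right M ξ)
    have h1 : |ξ 1 / jb M ξ| ≤ 1 := by
      rw [abs_div, abs_of_pos hJ, div_le_one hJ]
      exact le_trans (coordR_le ξ 1) (le_jb_right M ξ)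
    have h2 : |M / jb M ξ| ≤ 1 := by
      rw [abs_div, abs_of_pos hJ, div_le_one hJ, _root_.abs_of_nonneg hM]
      exact le_jb_left M hM ξ
    linarith
  have hhalf : ‖((2 : ℂ)⁻¹)‖ = 2⁻¹ := by
    rw [norm_inv]; norm_num
  rcases hs with h | h <;> subst h
  · rw [PiM_one, norm_smul, hhalf]
    have := norm_add_le (1 : Matrix (Fin 2) (Fin 2) ℂ)
      (B (ξ 0 / jb M ξ) (ξ 1 / jb M ξ) (M / jb M ξ))
    have h1 := norm_one_le
    nlinarith [norm_nonneg (1 + B (ξ 0 / jb M ξ) (ξ 1 / jb M ξ) (M / jb M ξ))]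
  · rw [PiM_neg, norm_smul, hhalf]
    have := norm_sub_le (1 : Matrix (Fin 2) (Fin 2) ℂ)
      (B (ξ 0 / jb M ξ) (ξ 1 / jb M ξ) (M / jb M ξ))
    have h1 := norm_one_le
    nlinarith [norm_nonneg (1 - B (ξ 0 / jb M ξ) (ξ 1 / jb M ξ) (M / jb M ξ))]

/-! ### Main theorem -/

theorem stmt4 (M : ℝ) (hM : 0 ≤ M) :
    ∃ C : ℝ, 0 < C ∧ ∀ (ξ η : E2), ξ ≠ 0 → η ≠ 0 →
      opNorm (PiM M 1 ξ * PiM M (-1) η) ≤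
        C * (InnerProductGeometry.angle ξ η + (jb 1 ξ)⁻¹ + (jb 1 η)⁻¹) ∧
      opNorm (PiM M (-1) ξ * PiM M 1 η) ≤
        C * (InnerProductGeometry.angle ξ η + (jb 1 ξ)⁻¹ + (jb 1 η)⁻¹) := by
  refine ⟨100 * (M + 1), by positivity, fun ξ η hξ hη => ?_⟩
  set θ := InnerProductGeometry.angle ξ η with hθdef
  set X := (jb 1 ξ)⁻¹ with hXdef
  set Y := (jb 1 η)⁻¹ with hYdef
  have hθ : 0 ≤ θ := angle_nonneg ξ η
  have hX : 0 ≤ X := le_of_lt (inv_pos.2 (jb1_pos ξ))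
  have hY : 0 ≤ Y := le_of_lt (inv_pos.2 (jb1_pos η))
  set Dξ := B (ξ 0 / jb M ξ) (ξ 1 / jb M ξ) (M / jb M ξ) with hDξ
  set Dη := B (η 0 / jb M η) (η 1 / jb M η) (M / jb M η) with hDη
  -- bound on the difference
  have hdiff : ‖Dξ - Dη‖ ≤ 6 * (M + 1) * (θ + X + Y) := by
    rw [hDξ, hDη, B_sub]
    refine le_trans (norm_B_le _ _ _) ?_
    have := coeff_bound M hM hξ hη
    rw [← hθdef, ← hXdef, ← hYdef] at this
    linarith
  have hnPξp := norm_PiM_le M hM 1 (Or.inl rfl) hξ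
  have hnPξm := norm_PiM_le M hM (-1) (Or.inr rfl) hξ
  have hzero := PiM_mul_zero M hξ
  have hhalf : ‖((2 : ℂ)⁻¹)‖ = 2⁻¹ := by rw [norm_inv]; norm_num
  constructor
  · -- Π₊(ξ) Π₋(η)
    have hdecomp : PiM M 1 ξ * PiM M (-1) η
        = (2 : ℂ)⁻¹ • (PiM M 1 ξ * (Dξ - Dη)) := by
      have : PiM M (-1) η = PiM M (-1) ξ + (2 : ℂ)⁻¹ • (Dξ - Dη) := by
        rw [PiM_neg, PiM_neg, ← hDξ, ← hDη, ← smul_add]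
        congr 1
        abel
      rw [this, mul_add, hzero.1, zero_add, mul_smul_comm]
    rw [opNorm_eq_norm, hdecomp, norm_smul, hhalf]
    have hmul : ‖PiM M 1 ξ * (Dξ - Dη)‖ ≤ ‖PiM M 1 ξ‖ * ‖Dξ - Dη‖ :=
      Matrix.l2_opNorm_mul _ _
    have hDnn : 0 ≤ ‖Dξ - Dη‖ := norm_nonneg _
    nlinarith [norm_nonneg (PiM M 1 ξ)]
  · -- Π₋(ξ) Π₊(η)
    have hdecomp : PiM M (-1) ξ * PiM M 1 η
        = (2 : ℂ)⁻¹ • (PiM M (-1) ξ * (Dη - Dξ)) := by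
      have : PiM M 1 η = PiM M 1 ξ + (2 : ℂ)⁻¹ • (Dη - Dξ) := by
        rw [PiM_one, PiM_one, ← hDξ, ← hDη, ← smul_add]
        congr 1
        abel
      rw [this, mul_add, hzero.2, zero_add, mul_smul_comm]
    rw [opNorm_eq_norm, hdecomp, norm_smul, hhalf]
    have hmul : ‖PiM M (-1) ξ * (Dη - Dξ)‖ ≤ ‖PiM M (-1) ξ‖ * ‖Dη - Dξ‖ :=
      Matrix.l2_opNorm_mul _ _
    have hdiff' : ‖Dη - Dξ‖ ≤ 6 * (M + 1) * (θ + X + Y) := by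
      rw [← norm_neg, neg_sub]; exact hdiff
    have hDnn : 0 ≤ ‖Dη - Dξ‖ := norm_nonneg _
    nlinarith [norm_nonneg (PiM M (-1) ξ)]
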